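/- Let G be a real 2n×2n matrix that is symmetric, positive definite, and symplectic. Then there exists a symplectic matrix S ∈ Sp(2n,ℝ) such that G = (S⁻¹)ᵀS⁻¹. Consequently, for every z₀ ∈ ℝ²ⁿ and every ħ > 0, the ellipsoid {z ∈ ℝ²ⁿ : ⟨G(z−z₀), z−z₀⟩ ≤ ħ} equals the image of the closed ball of radius √ħ centered at the origin under the affine map z ↦ Sz + z₀, i.e. it is a quantum blob. -/

import Mathlib

open Matrix

noncomputable section

/-- The standard symplectic matrix `J = ((0, I), (-I, 0))`. -/
def stdJ (n : ℕ) : Matrix (Fin n ⊕ Fin n) (Fin n ⊕ Fin n) ℝ :=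
  Matrix.fromBlocks 0 1 (-1) 0

/-- A real `2n × 2n` matrix is symplectic if `Sᵀ J S = J`. -/
def IsSymplectic {n : ℕ} (S : Matrix (Fin n ⊕ Fin n) (Fin n ⊕ Fin n) ℝ) : Prop :=
  Sᵀ * stdJ n * S = stdJ n

lemma stdJ_transpose (n : ℕ) : (stdJ n)ᵀ = -(stdJ n) := by
  rw [stdJ, fromBlocks_transpose, fromBlocks_neg]
  simp

lemma stdJ_mul_self (n : ℕ) : stdJ n * stdJ n = -1 := by
  rw [stdJ, fromBlocks_multiply, ← fromBlocks_one, fromBlocks_neg]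
  simp

lemma stdJ_mul_transpose (n : ℕ) : stdJ n * (stdJ n)ᵀ = 1 := by
  rw [stdJ_transpose, Matrix.mul_neg, stdJ_mul_self]; simp

lemma stdJ_transpose_mul (n : ℕ) : (stdJ n)ᵀ * stdJ n = 1 := by
  rw [stdJ_transpose, Matrix.neg_mul, stdJ_mul_self]; simp

open scoped MatrixOrder in
def psdSqrt {m : Type*} [Fintype m] [DecidableEq m] (G : Matrix m m ℝ) : Matrix m m ℝ :=
  CFC.sqrt G

open scoped MatrixOrder in
lemma psd_sqrt_spec {m : Type*} [Fintype m] [DecidableEq m] {G : Matrix m m ℝ}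
    (hG : G.PosSemidef) : (psdSqrt G).PosSemidef ∧ psdSqrt G * psdSqrt G = G :=
  ⟨(CFC.sqrt_nonneg G).posSemidef, CFC.sqrt_mul_sqrt_self G hG.nonneg⟩

open scoped MatrixOrder in
lemma psd_eq_sqrt_of_sq_eq {m : Type*} [Fintype m] [DecidableEq m] {B G : Matrix m m ℝ}
    (hB : B.PosSemidef) (hG : G.PosSemidef) (h : B ^ 2 = G) : B = psdSqrt G := by
  rw [psdSqrt, eq_comm, CFC.sqrt_eq_iff G B hG.nonneg hB.nonneg, ← pow_two, h]

/-- If `G` is symmetric, positive definite and symplectic, then `G = (S⁻¹)ᵀ S⁻¹` for some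
symplectic `S`, and the ellipsoid `⟨G(z - z₀), z - z₀⟩ ≤ hb` is the quantum blob
`QB(z₀, S)`, i.e. the image of the closed ball of radius `√hb` under `z ↦ Sz + z₀`. -/
theorem quantum_blob_of_posdef_symplectic {n : ℕ} (hn : 1 ≤ n)
    (G : Matrix (Fin n ⊕ Fin n) (Fin n ⊕ Fin n) ℝ)
    (hGsymm : G.IsSymm) (hGpos : G.PosDef) (hGsympl : IsSymplectic G) :
    ∃ S : Matrix (Fin n ⊕ Fin n) (Fin n ⊕ Fin n) ℝ, IsSymplectic S ∧
      G = (S⁻¹)ᵀ * S⁻¹ ∧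
      ∀ (z₀ : (Fin n ⊕ Fin n) → ℝ) (hb : ℝ), 0 < hb →
        {z : (Fin n ⊕ Fin n) → ℝ | G.mulVec (z - z₀) ⬝ᵥ (z - z₀) ≤ hb} =
          (fun z => S.mulVec z + z₀) ''
            {z : (Fin n ⊕ Fin n) → ℝ | Real.sqrt (z ⬝ᵥ z) ≤ Real.sqrt hb} := by
  classical
  set K := stdJ n with hK
  set A := psdSqrt G with hAdef
  have hA : A.PosSemidef := (psd_sqrt_spec hGpos.posSemidef).1
  have hAA : A * A = G := (psd_sqrt_spec hGpos.posSemidef).2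
  have hGT : Gᵀ = G := hGsymm
  have hAT : Aᵀ = A := by
    rw [← Matrix.conjTranspose_eq_transpose_of_trivial]
    exact hA.isHermitian
  -- A is invertible
  have hdetA : IsUnit A.det := by
    have h1 : A.det * A.det = G.det := by rw [← Matrix.det_mul, hAA]
    have h2 : (0 : ℝ) < G.det := hGpos.det_pos
    have : A.det ≠ 0 := fun h => by simp [h] at h1; exact h2.ne' h1.symm
    exact this.isUnit
  -- A is positive definite
  have hApd : A.PosDef :=
    hA.posDef_iff_isUnit.mpr ((Matrix.isUnit_iff_isUnit_det A).mpr hdetA)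
  have hAinv : A⁻¹ * A = 1 := Matrix.nonsing_inv_mul A hdetA
  have hAinv' : A * A⁻¹ = 1 := Matrix.mul_nonsing_inv A hdetA
  -- G K G = K
  have hGKG : G * K * G = K := by
    have := hGsympl
    rwa [IsSymplectic, hGT] at this
  -- K G Kᵀ = G⁻¹
  have hGinvEq : G⁻¹ = K * G * Kᵀ := by
    refine Matrix.inv_eq_right_inv ?_
    calc G * (K * G * Kᵀ) = (G * K * G) * Kᵀ := by simp only [Matrix.mul_assoc]
    _ = K * Kᵀ := by rw [hGKG]
    _ = 1 := stdJ_mul_transpose n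
  -- B := K A Kᵀ is posSemidef and B² = G⁻¹
  have hB : (K * A * Kᵀ).PosSemidef := by
    have := hA.mul_mul_conjTranspose_same K
    rwa [Matrix.conjTranspose_eq_transpose_of_trivial] at this
  have hBB : (K * A * Kᵀ) * (K * A * Kᵀ) = G⁻¹ := by
    calc (K * A * Kᵀ) * (K * A * Kᵀ) = K * A * (Kᵀ * K) * A * Kᵀ := by
          simp only [Matrix.mul_assoc]
    _ = K * (A * A) * Kᵀ := by rw [stdJ_transpose_mul, Matrix.mul_one]; simp only [Matrix.mul_assoc]
    _ = G⁻¹ := by rw [hAA, hGinvEq]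
  have hGinvPsd : (G⁻¹).PosSemidef := hGpos.inv.posSemidef
  have hAinvPsd : (A⁻¹).PosSemidef := hApd.inv.posSemidef
  have hAinvSq : A⁻¹ * A⁻¹ = G⁻¹ := by
    rw [← Matrix.mul_inv_rev, hAA]
  -- uniqueness of the positive square root
  have hBeq : K * A * Kᵀ = A⁻¹ := by
    have h1 : K * A * Kᵀ = psdSqrt G⁻¹ :=
      psd_eq_sqrt_of_sq_eq hB hGinvPsd (by rw [pow_two, hBB])
    have h2 : A⁻¹ = psdSqrt G⁻¹ :=
      psd_eq_sqrt_of_sq_eq hAinvPsd hGinvPsd (by rw [pow_two, hAinvSq])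
    rw [h1, h2]
  -- A is symplectic : A K A = K
  have hKA : K * A = A⁻¹ * K := by
    have := congrArg (· * K) hBeq
    simpa [Matrix.mul_assoc, hK, stdJ_transpose_mul n] using this
  have hAKA : A * K * A = K := by
    calc A * K * A = A * (K * A) := by rw [Matrix.mul_assoc]
    _ = A * (A⁻¹ * K) := by rw [hKA]
    _ = (A * A⁻¹) * K := by rw [Matrix.mul_assoc]
    _ = K := by rw [hAinv', Matrix.one_mul]
  have hAinvT : (A⁻¹)ᵀ = A⁻¹ := by rw [Matrix.transpose_nonsing_inv, hAT]
  have hAinvKAinv : A⁻¹ * K * A⁻¹ = K := by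
    calc A⁻¹ * K * A⁻¹ = A⁻¹ * (A * K * A) * A⁻¹ := by rw [hAKA]
    _ = (A⁻¹ * A) * K * (A * A⁻¹) := by simp only [Matrix.mul_assoc]
    _ = K := by rw [hAinv, hAinv', Matrix.one_mul, Matrix.mul_one]
  -- key dot product identity
  have key : ∀ v : (Fin n ⊕ Fin n) → ℝ, G *ᵥ v ⬝ᵥ v = (A *ᵥ v) ⬝ᵥ (A *ᵥ v) := by
    intro v
    calc G *ᵥ v ⬝ᵥ v = (A * A) *ᵥ v ⬝ᵥ v := by rw [hAA]
    _ = (A *ᵥ (A *ᵥ v)) ⬝ᵥ v := by rw [Matrix.mulVec_mulVec]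
    _ = v ⬝ᵥ (A *ᵥ (A *ᵥ v)) := dotProduct_comm _ _
    _ = (v ᵥ* A) ⬝ᵥ (A *ᵥ v) := Matrix.dotProduct_mulVec _ _ _
    _ = (Aᵀ *ᵥ v) ⬝ᵥ (A *ᵥ v) := by rw [Matrix.mulVec_transpose]
    _ = (A *ᵥ v) ⬝ᵥ (A *ᵥ v) := by rw [hAT]
  refine ⟨A⁻¹, ?_, ?_, ?_⟩
  · -- A⁻¹ is symplectic
    show (A⁻¹)ᵀ * K * A⁻¹ = K
    rw [hAinvT, hAinvKAinv]
  · -- G = (S⁻¹)ᵀ * S⁻¹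
    rw [Matrix.nonsing_inv_nonsing_inv A hdetA, hAT, hAA]
  · intro z₀ hb hbpos
    ext w
    simp only [Set.mem_setOf_eq, Set.mem_image]
    have hself : ∀ u : (Fin n ⊕ Fin n) → ℝ, (0:ℝ) ≤ u ⬝ᵥ u := fun u =>
      Finset.sum_nonneg fun i _ => mul_self_nonneg _
    constructor
    · intro hw
      refine ⟨A *ᵥ (w - z₀), ?_, ?_⟩
      · have : (A *ᵥ (w - z₀)) ⬝ᵥ (A *ᵥ (w - z₀)) ≤ hb := by rw [← key]; exact hw
        exact Real.sqrt_le_sqrt this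
      · rw [Matrix.mulVec_mulVec, hAinv, Matrix.one_mulVec, sub_add_cancel]
    · rintro ⟨z, hz, rfl⟩
      have hzz : z ⬝ᵥ z ≤ hb := (Real.sqrt_le_sqrt_iff hbpos.le).mp hz
      have heq : A⁻¹ *ᵥ z + z₀ - z₀ = A⁻¹ *ᵥ z := by abel
      rw [heq, key, Matrix.mulVec_mulVec, hAinv', Matrix.one_mulVec]
      exact hzz
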